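/- There is a constant c > 0 such that for every real number x' with |x'| ≤ 2ρ one has ∫_{1/b}^∞ V'(r) / ( V'(r)² + (U'(r) - x')² ) dr ≤ c. In particular, since |x'|^{-1+1/γ} ≥ (2ρ)^{-1+1/γ} for 0 < |x'| ≤ 2ρ, this integral is bounded by a constant times |x'|^{-1+1/γ} for all 0 < |x'| ≤ 2ρ. -/

import Mathlib

open Complex MeasureTheory

lemma aux_arg_lt {z w : ℂ} (hz : z.im = 1) (hw : w.im = 1) (h : z.re < w.re) :
    Complex.arg w < Complex.arg z := by
  have hc : ∀ u : ℂ, u.im = 1 → Real.cos (Complex.arg u) = Real.sin (Real.arctan u.re) := by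
    intro u hu
    have hu0 : u ≠ 0 := fun h0 => by simp [h0] at hu
    rw [Complex.cos_arg hu0, Real.sin_arctan, Complex.norm_def, Complex.normSq_apply, hu]
    ring_nf
  have h1 : Real.cos (Complex.arg z) < Real.cos (Complex.arg w) := by
    rw [hc z hz, hc w hw]
    exact Real.strictMonoOn_sin
      ⟨(Real.neg_pi_div_two_lt_arctan _).le, (Real.arctan_lt_pi_div_two _).le⟩
      ⟨(Real.neg_pi_div_two_lt_arctan _).le, (Real.arctan_lt_pi_div_two _).le⟩
      (Real.arctan_strictMono h)
  have hmz : Complex.arg z ∈ Set.Icc 0 Real.pi :=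
    ⟨Complex.arg_nonneg_iff.2 (by rw [hz]; norm_num), Complex.arg_le_pi _⟩
  have hmw : Complex.arg w ∈ Set.Icc 0 Real.pi :=
    ⟨Complex.arg_nonneg_iff.2 (by rw [hw]; norm_num), Complex.arg_le_pi _⟩
  exact (Real.strictAntiOn_cos.lt_iff_gt hmz hmw).1 h1

lemma aux_im_cpow (z : ℂ) (hz : z ≠ 0) (γ : ℝ) :
    ((z) ^ (γ:ℂ)).im
      = Real.exp (Real.log ‖z‖ * γ) * Real.sin (Complex.arg z * γ) := by
  rw [Complex.cpow_def_of_ne_zero hz, Complex.exp_im]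
  simp [Complex.mul_re, Complex.mul_im, Complex.log_re, Complex.log_im]

set_option maxHeartbeats 1000000 in
/-- There is `c > 0` such that for every real `x'` with `|x'| ≤ 2ρ`,
`∫_{1/b}^∞ V'(r) / (V'(r)² + (U'(r) - x')²) dr ≤ c`; in particular this
integral is bounded by a constant times `|x'|^{-1+1/γ}` for `0 < |x'| ≤ 2ρ`. -/
theorem stmt_5 (a b : ℝ) (hb : 0 < b)
    (ζs : ℂ) (hζs : ζs = -(a : ℂ) / (b : ℂ) + Complex.I)
    (γ : ℝ) (hγ : γ = Real.pi / Complex.arg ζs)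
    (ρ : ℝ) (hρ : ρ = ‖ζs‖ ^ γ)
    (U' V' : ℝ → ℝ)
    (hU : ∀ r : ℝ, U' r = ((ζs + (r : ℂ)) ^ (γ : ℂ)).re)
    (hV : ∀ r : ℝ, V' r = ((ζs + (r : ℂ)) ^ (γ : ℂ)).im) :
    ∃ c : ℝ, 0 < c ∧
      (∀ x' : ℝ, |x'| ≤ 2 * ρ →
        (∫ r in Set.Ioi (1 / b), V' r / (V' r ^ 2 + (U' r - x') ^ 2)) ≤ c) ∧
      (∀ x' : ℝ, 0 < |x'| → |x'| ≤ 2 * ρ →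
        (∫ r in Set.Ioi (1 / b), V' r / (V' r ^ 2 + (U' r - x') ^ 2))
          ≤ c * |x'| ^ (-1 + 1 / γ)) := by
  have hζ' : ζs = ((-a/b : ℝ) : ℂ) + Complex.I := by rw [hζs]; push_cast; ring
  have him : ∀ r : ℝ, (ζs + (r:ℂ)).im = 1 := by intro r; simp [hζ']
  have hre : ∀ r : ℝ, (ζs + (r:ℂ)).re = -a/b + r := by intro r; simp [hζ']
  have hne : ∀ r : ℝ, ζs + (r:ℂ) ≠ 0 := by
    intro r h
    have h2 := him r
    rw [h] at h2; simp at h2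
  have hζim : ζs.im = 1 := by simp [hζ']
  have hζne : ζs ≠ 0 := fun h => by rw [h] at hζim; simp at hζim
  have habsζ : 0 < ‖ζs‖ := norm_pos_iff.mpr hζne
  have hθpos : 0 < Complex.arg ζs := by
    rcases (Complex.arg_nonneg_iff.2 (by rw [hζim]; norm_num)).lt_or_eq with h | h
    · exact h
    · exact absurd ((Complex.arg_eq_zero_iff.1 h.symm).2) (by rw [hζim]; norm_num)
  have hθlt : Complex.arg ζs < Real.pi :=
    Complex.arg_lt_pi_iff.2 (Or.inr (by rw [hζim]; norm_num))
  have hγ1 : 1 < γ := by rw [hγ]; exact (one_lt_div hθpos).2 hθlt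
  have hγ0 : 0 < γ := lt_trans one_pos hγ1
  have hγθ : γ * Complex.arg ζs = Real.pi := by rw [hγ]; field_simp
  have hρ0 : 0 < ρ := by rw [hρ]; exact Real.rpow_pos_of_pos habsζ _
  have hble : 0 < 1/b := by positivity
  have hargpos : ∀ r : ℝ, 0 < Complex.arg (ζs + (r:ℂ)) := by
    intro r
    rcases (Complex.arg_nonneg_iff.2 (by rw [him r]; norm_num)).lt_or_eq with h | h
    · exact h
    · exact absurd ((Complex.arg_eq_zero_iff.1 h.symm).2) (by rw [him r]; norm_num)
  have harglt : ∀ r : ℝ, 0 < r → Complex.arg (ζs + (r:ℂ)) < Complex.arg ζs := by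
    intro r hr
    exact aux_arg_lt hζim (him r) (by simp [Complex.add_re]; linarith)
  have hVpos : ∀ r : ℝ, 0 < r → 0 < V' r := by
    intro r hr
    rw [hV r, aux_im_cpow _ (hne r)]
    apply mul_pos (Real.exp_pos _)
    apply Real.sin_pos_of_pos_of_lt_pi
    · exact mul_pos (hargpos r) hγ0
    · calc Complex.arg (ζs + (r:ℂ)) * γ < Complex.arg ζs * γ :=
            mul_lt_mul_of_pos_right (harglt r hr) hγ0
        _ = Real.pi := by rw [mul_comm]; exact hγθ
  have habsW : ∀ r : ℝ, ‖(ζs + (r:ℂ)) ^ (γ:ℂ)‖ = ‖ζs + (r:ℂ)‖ ^ γ :=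
    fun r => Complex.norm_cpow_real _ _
  have hVle : ∀ r : ℝ, V' r ≤ ‖ζs + (r:ℂ)‖ ^ γ := by
    intro r
    rw [hV r, ← habsW r]
    exact (le_abs_self _).trans (Complex.abs_im_le_norm _)
  have hVc : Continuous V' := by
    have h1 : Continuous fun r : ℝ => (ζs + (r:ℂ)) ^ (γ:ℂ) := by
      apply continuous_iff_continuousAt.2
      intro r
      exact (continuousAt_cpow_const
        (Complex.mem_slitPlane_iff.2 (Or.inr (by rw [him r]; norm_num)))).comp
        ((continuous_const.add Complex.continuous_ofReal).continuousAt)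
    have h2 : Continuous fun r : ℝ => ((ζs + (r:ℂ)) ^ (γ:ℂ)).im := Complex.continuous_im.comp h1
    rw [funext hV]; exact h2
  obtain ⟨A, hA⟩ : ∃ A : ℝ, A = |a|/b := ⟨_, rfl⟩
  have hA0 : 0 ≤ A := by rw [hA]; positivity
  obtain ⟨q, hq⟩ : ∃ q : ℝ, q = (4*ρ) ^ (1/γ) := ⟨_, rfl⟩
  have hq0 : 0 ≤ q := by rw [hq]; positivity
  obtain ⟨R, hR⟩ : ∃ R : ℝ, R = 2*A + 1/b + q + 1 := ⟨_, rfl⟩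
  have hRb : 1/b < R := by rw [hR]; linarith
  have hR0 : 0 < R := lt_trans hble hRb
  obtain ⟨r₀, hr₀mem, hr₀min⟩ :=
    (isCompact_Icc : IsCompact (Set.Icc (1/b) R)).exists_isMinOn
      ⟨1/b, Set.mem_Icc.2 ⟨le_refl _, hRb.le⟩⟩ hVc.continuousOn
  set m := V' r₀ with hm
  have hm0 : 0 < m := hVpos r₀ (lt_of_lt_of_le hble hr₀mem.1)
  set g : ℝ → ℝ := fun r => if r ≤ R then 1/m else (4 * 2^γ) * r ^ (-γ) with hg
  -- pointwise bounds
  have key1 : ∀ x' : ℝ, |x'| ≤ 2*ρ → ∀ r ∈ Set.Ioi (1/b),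
      V' r / (V' r ^ 2 + (U' r - x') ^ 2) ≤ g r := by
    intro x' hx' r hr
    rw [Set.mem_Ioi] at hr
    have hr0 : 0 < r := lt_trans hble hr
    have hVr : 0 < V' r := hVpos r hr0
    by_cases hcase : r ≤ R
    · have hle1 : V' r / (V' r ^ 2 + (U' r - x') ^ 2) ≤ 1 / V' r := by
        rw [div_le_div_iff₀ (by positivity) hVr]
        nlinarith [sq_nonneg (U' r - x')]
      have hle2 : 1 / V' r ≤ 1 / m := by
        apply one_div_le_one_div_of_le hm0
        exact hr₀min ⟨hr.le, hcase⟩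
      simp only [hg, if_pos hcase]
      linarith
    · push_neg at hcase
      simp only [hg, if_neg (not_le.2 hcase)]
      obtain ⟨W, hW⟩ : ∃ W : ℝ, W = ‖ζs + (r:ℂ)‖ ^ γ := ⟨_, rfl⟩
      obtain ⟨D, hD⟩ : ∃ D : ℝ, D = ‖(ζs + (r:ℂ)) ^ (γ:ℂ) - (x':ℂ)‖ := ⟨_, rfl⟩
      have hrA1 : q ≤ r - A := by rw [hR] at hcase; linarith
      have hrA2 : r/2 ≤ r - A := by rw [hR] at hcase; linarith
      have hrA0 : 0 < r - A := lt_of_lt_of_le (by linarith [lt_of_lt_of_le hble (le_trans hr.le (le_refl r))] : (0:ℝ) < r/2) hrA2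
      have habs_ge : r - A ≤ ‖ζs + (r:ℂ)‖ := by
        refine le_trans ?_ (Complex.re_le_norm _)
        rw [hre r, hA, neg_div]
        have h3 : a/b ≤ |a|/b := by gcongr; exact le_abs_self a
        linarith
      have hVleW : V' r ≤ W := by rw [hW]; exact hVle r
      have hW4ρ : 4*ρ ≤ W := by
        rw [hW]
        calc 4*ρ = ((4*ρ) ^ (1/γ)) ^ γ := by
              rw [one_div, Real.rpow_inv_rpow (by positivity) hγ0.ne']
          _ = q ^ γ := by rw [hq]
          _ ≤ (r-A) ^ γ := Real.rpow_le_rpow hq0 hrA1 hγ0.le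
          _ ≤ _ := Real.rpow_le_rpow hrA0.le habs_ge hγ0.le
      have hW0 : 0 < W := lt_of_lt_of_le (by positivity) hW4ρ
      have hWhalf : r ^ γ ≤ 2 ^ γ * W := by
        have h4 : (r/2) ^ γ ≤ W := by
          rw [hW]
          calc (r/2) ^ γ ≤ (r-A) ^ γ := Real.rpow_le_rpow (by positivity) hrA2 hγ0.le
            _ ≤ _ := Real.rpow_le_rpow hrA0.le habs_ge hγ0.le
        have h5 : (r/2 : ℝ) ^ γ = r ^ γ / 2 ^ γ := Real.div_rpow hr0.le (by norm_num) γ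
        have h2γ : (0:ℝ) < 2 ^ γ := Real.rpow_pos_of_pos (by norm_num) _
        rw [h5, div_le_iff₀ h2γ] at h4
        linarith [h4]
      have hden : V' r ^ 2 + (U' r - x') ^ 2 = D ^ 2 := by
        rw [hD, Complex.sq_norm, Complex.normSq_apply, hU r, hV r]
        simp only [Complex.sub_re, Complex.sub_im, Complex.ofReal_re, Complex.ofReal_im]
        ring
      have htri : W ≤ D + |x'| := by
        have h3 := norm_add_le ((ζs + (r:ℂ)) ^ (γ:ℂ) - (x':ℂ)) (x':ℂ)
        rw [sub_add_cancel, habsW r, Complex.norm_real, Real.norm_eq_abs] at h3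
        rw [hW, hD]
        exact h3
      have habsd : W/2 ≤ D := by linarith
      have hD0 : 0 < D := lt_of_lt_of_le (by linarith) habsd
      have hdpos : 0 < V' r ^ 2 + (U' r - x') ^ 2 := by rw [hden]; positivity
      have hstep1 : V' r / (V' r ^ 2 + (U' r - x') ^ 2) ≤ 4 / W := by
        rw [div_le_div_iff₀ hdpos hW0, hden]
        nlinarith [sq_nonneg (D - W/2), mul_le_mul_of_nonneg_right hVleW hW0.le]
      have hrγ : 0 < r ^ γ := Real.rpow_pos_of_pos hr0 _
      have hstep2 : 4 / W ≤ (4 * 2 ^ γ) * r ^ (-γ) := by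
        rw [Real.rpow_neg hr0.le, ← div_eq_mul_inv, div_le_div_iff₀ hW0 hrγ]
        nlinarith [hWhalf]
      linarith
  have key0 : ∀ x' : ℝ, ∀ r ∈ Set.Ioi (1/b), 0 ≤ V' r / (V' r ^ 2 + (U' r - x') ^ 2) := by
    intro x' r hr
    rw [Set.mem_Ioi] at hr
    exact div_nonneg (hVpos r (lt_trans hble hr)).le (by positivity)
  have hint : IntegrableOn g (Set.Ioi (1/b)) := by
    rw [← Set.Ioc_union_Ioi_eq_Ioi hRb.le]
    apply MeasureTheory.IntegrableOn.union
    · have h6 : IntegrableOn (fun _ : ℝ => 1/m) (Set.Ioc (1/b) R) :=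
        integrableOn_const (C := 1/m) measure_Ioc_lt_top.ne
      refine h6.congr_fun ?_ measurableSet_Ioc
      intro x hx
      simp only [hg, if_pos hx.2]
    · have h6 : IntegrableOn (fun x : ℝ => (4 * 2 ^ γ) * x ^ (-γ)) (Set.Ioi R) :=
        (integrableOn_Ioi_rpow_of_lt (show -γ < -1 by linarith) hR0).const_mul (4 * 2 ^ γ)
      refine h6.congr_fun ?_ measurableSet_Ioi
      intro x hx
      rw [Set.mem_Ioi] at hx
      simp only [hg, if_neg (not_le.2 hx)]
  set c₀ := ∫ r in Set.Ioi (1/b), g r with hc₀def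
  have hc₀ : 0 ≤ c₀ := by
    apply setIntegral_nonneg measurableSet_Ioi
    intro x hx
    rw [Set.mem_Ioi] at hx
    have hx0 : 0 < x := lt_trans hble hx
    simp only [hg]
    split_ifs
    · positivity
    · have : 0 ≤ x ^ (-γ) := Real.rpow_nonneg hx0.le _
      positivity
  have hmain : ∀ x' : ℝ, |x'| ≤ 2*ρ →
      (∫ r in Set.Ioi (1/b), V' r / (V' r ^ 2 + (U' r - x') ^ 2)) ≤ c₀ := by
    intro x' hx'
    apply MeasureTheory.integral_mono_of_nonneg
    · exact (ae_restrict_iff' measurableSet_Ioi).2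
        (Filter.Eventually.of_forall fun r hr => key0 x' r hr)
    · exact hint
    · exact (ae_restrict_iff' measurableSet_Ioi).2
        (Filter.Eventually.of_forall fun r hr => key1 x' hx' r hr)
  have hs0 : 0 ≤ (2*ρ) ^ (1 - 1/γ) := Real.rpow_nonneg (by positivity) _
  refine ⟨(c₀ + 1) * (1 + (2*ρ) ^ (1 - 1/γ)), by positivity, fun x' hx' => ?_,
    fun x' hx0 hx' => ?_⟩
  · have := hmain x' hx'
    nlinarith
  · have hexp : -1 + 1/γ ≤ 0 := by
      have : 1/γ < 1 := by rw [div_lt_one hγ0]; exact hγ1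
      linarith
    have hu0 : 0 < (2*ρ) ^ (-1 + 1/γ) := Real.rpow_pos_of_pos (by positivity) _
    have ht : (2*ρ) ^ (-1 + 1/γ) ≤ |x'| ^ (-1 + 1/γ) :=
      Real.rpow_le_rpow_of_nonpos hx0 hx' hexp
    have hsu : (2*ρ) ^ (1 - 1/γ) * (2*ρ) ^ (-1 + 1/γ) = 1 := by
      rw [← Real.rpow_add (by positivity), show (1 - 1/γ) + (-1 + 1/γ) = 0 by ring,
        Real.rpow_zero]
    have h1 := hmain x' hx'
    have h2 : 0 ≤ ((c₀ + 1) * (1 + (2*ρ) ^ (1 - 1/γ))) *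
        (|x'| ^ (-1 + 1/γ) - (2*ρ) ^ (-1 + 1/γ)) := by
      apply mul_nonneg (by positivity)
      linarith
    nlinarith [hsu, hu0, hs0, hc₀]
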